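/- For every integer m > 1, every positive multiple of 3 satisfies D_m(n) < n. -/

import Mathlib

open Finset

/-- The Schemmel totient function: `L m 0 = 0`, `L m 1 = 1`, and for `n > 1`,
`L m n = ∏ p^(α-1) (p - m)` over the canonical factorization of `n` if every
prime divisor of `n` exceeds `m`, and `0` otherwise. -/
def L (m n : ℕ) : ℕ :=
  if n ≤ 1 then n
  else if ∀ p ∈ n.primeFactors, m < p then
    ∏ p ∈ n.primeFactors, p ^ (n.factorization p - 1) * (p - m)
  else 0

/-- `R m n` is the least positive `k` with `L_m^{(k)}(n) ∈ {0, 1}`. -/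
noncomputable def R (m n : ℕ) : ℕ :=
  sInf {k | 0 < k ∧ ((L m)^[k] n = 0 ∨ (L m)^[k] n = 1)}

/-- `H m n = L_m^{(R_m(n))}(n)`. -/
noncomputable def H (m n : ℕ) : ℕ := (L m)^[R m n] n

/-- `D m 1 = 0` and `D m n = ∑_{i=1}^{R_m(n)} L_m^{(i)}(n)` for `n > 1`. -/
noncomputable def D (m n : ℕ) : ℕ :=
  if n = 1 then 0 else ∑ i ∈ Finset.Icc 1 (R m n), (L m)^[i] n

lemma L_pos_primes {m n : ℕ} (hn : 1 < n) (hL : L m n ≠ 0) :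
    ∀ p ∈ n.primeFactors, m < p := by
  by_contra h
  simp only [L, if_neg (by omega : ¬ n ≤ 1), if_neg h] at hL
  exact hL rfl

lemma L_eq_prod {m n : ℕ} (hn : 1 < n) (h : ∀ p ∈ n.primeFactors, m < p) :
    L m n = ∏ p ∈ n.primeFactors, p ^ (n.factorization p - 1) * (p - m) := by
  simp only [L, if_neg (by omega : ¬ n ≤ 1), if_pos h]

lemma fact_pos {n p : ℕ} (hp : p ∈ n.primeFactors) : 1 ≤ n.factorization p :=
  (Nat.Prime.factorization_pos_of_dvd (Nat.prime_of_mem_primeFactors hp)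
    (Nat.mem_primeFactors.1 hp).2.2 (Nat.dvd_of_mem_primeFactors hp))

lemma n_eq_prod {n : ℕ} (hn : n ≠ 0) : ∏ p ∈ n.primeFactors, p ^ n.factorization p = n :=
  Nat.factorization_prod_pow_eq_self hn

lemma pow_fact_eq {q a : ℕ} (ha : 1 ≤ a) : q ^ (a - 1) * q = q ^ a := by
  rw [← pow_succ]; congr 1; omega

lemma L_lt {m n : ℕ} (hm : 1 < m) (hn : 1 < n) : L m n < n := by
  by_cases h : ∀ p ∈ n.primeFactors, m < p
  · rw [L_eq_prod hn h]
    obtain ⟨q, hq⟩ := (Nat.nonempty_primeFactors).2 hn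
    have hqd := Nat.dvd_of_mem_primeFactors hq
    conv_rhs => rw [← n_eq_prod (by omega : n ≠ 0)]
    rw [← Finset.mul_prod_erase _ _ hq, ← Finset.mul_prod_erase _ (fun p => p ^ n.factorization p) hq]
    have hrest : ∏ p ∈ n.primeFactors.erase q, p ^ (n.factorization p - 1) * (p - m)
        ≤ ∏ p ∈ n.primeFactors.erase q, p ^ n.factorization p := by
      apply Finset.prod_le_prod'
      intro p hp
      have hp' := Finset.mem_of_mem_erase hp
      have ha := fact_pos hp'
      calc p ^ (n.factorization p - 1) * (p - m) ≤ p ^ (n.factorization p - 1) * p :=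
            Nat.mul_le_mul_left _ (by omega)
        _ = p ^ n.factorization p := pow_fact_eq ha
    have hq1 : q ^ (n.factorization q - 1) * (q - m) < q ^ n.factorization q := by
      have ha := fact_pos hq
      have hqp : 1 < q := (Nat.prime_of_mem_primeFactors hq).one_lt
      calc q ^ (n.factorization q - 1) * (q - m) < q ^ (n.factorization q - 1) * q :=
            Nat.mul_lt_mul_of_pos_left (by omega) (Nat.pow_pos (by omega))
        _ = q ^ n.factorization q := pow_fact_eq ha
    have hrestpos : 0 < ∏ p ∈ n.primeFactors.erase q, p ^ n.factorization p := by
      apply Finset.prod_pos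
      intro p hp
      exact Nat.pow_pos (Nat.pos_of_mem_primeFactors (Finset.mem_of_mem_erase hp))
    calc q ^ (n.factorization q - 1) * (q - m) * ∏ p ∈ n.primeFactors.erase q, p ^ (n.factorization p - 1) * (p - m)
        ≤ q ^ (n.factorization q - 1) * (q - m) * ∏ p ∈ n.primeFactors.erase q, p ^ n.factorization p :=
          Nat.mul_le_mul_left _ hrest
      _ < q ^ n.factorization q * ∏ p ∈ n.primeFactors.erase q, p ^ n.factorization p :=
          Nat.mul_lt_mul_of_pos_right hq1 hrestpos
  · simp only [L, if_neg (by omega : ¬ n ≤ 1), if_neg h]; omega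

lemma prime_le {n p : ℕ} (h2 : ∀ q ∈ n.primeFactors, 2 < q) (hp : p ∈ n.primeFactors) :
    p ^ (n.factorization p - 1) * (p - 2) ≤ p ^ n.factorization p := by
  calc p ^ (n.factorization p - 1) * (p - 2) ≤ p ^ (n.factorization p - 1) * p :=
        Nat.mul_le_mul_left _ (by omega)
    _ = p ^ n.factorization p := pow_fact_eq (fact_pos hp)

/-- single distinguished prime bound -/
lemma L_ratio {n : ℕ} (hn : 1 < n) (h2 : ∀ p ∈ n.primeFactors, 2 < p)
    {q : ℕ} (hq : q ∈ n.primeFactors) (c d : ℕ)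
    (hb : c * (q ^ (n.factorization q - 1) * (q - 2)) ≤ d * q ^ n.factorization q) :
    c * L 2 n ≤ d * n := by
  rw [L_eq_prod hn h2]
  conv_rhs => rw [← n_eq_prod (by omega : n ≠ 0)]
  rw [← Finset.mul_prod_erase _ _ hq, ← Finset.mul_prod_erase _ (fun p => p ^ n.factorization p) hq]
  calc c * (q ^ (n.factorization q - 1) * (q - 2) *
          ∏ p ∈ n.primeFactors.erase q, p ^ (n.factorization p - 1) * (p - 2))
      = (c * (q ^ (n.factorization q - 1) * (q - 2))) *
          ∏ p ∈ n.primeFactors.erase q, p ^ (n.factorization p - 1) * (p - 2) := by ring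
    _ ≤ (d * q ^ n.factorization q) * ∏ p ∈ n.primeFactors.erase q, p ^ n.factorization p :=
        Nat.mul_le_mul hb (Finset.prod_le_prod' fun p hp =>
          prime_le h2 (Finset.mem_of_mem_erase hp))
    _ = d * (q ^ n.factorization q * ∏ p ∈ n.primeFactors.erase q, p ^ n.factorization p) := by
        ring

/-- two distinguished primes bound -/
lemma L_ratio2 {n : ℕ} (hn : 1 < n) (h2 : ∀ p ∈ n.primeFactors, 2 < p)
    {q1 q2 : ℕ} (hq1 : q1 ∈ n.primeFactors) (hq2 : q2 ∈ n.primeFactors) (hne : q2 ≠ q1)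
    (c1 d1 c2 d2 : ℕ)
    (hb1 : c1 * (q1 ^ (n.factorization q1 - 1) * (q1 - 2)) ≤ d1 * q1 ^ n.factorization q1)
    (hb2 : c2 * (q2 ^ (n.factorization q2 - 1) * (q2 - 2)) ≤ d2 * q2 ^ n.factorization q2) :
    c1 * c2 * L 2 n ≤ d1 * d2 * n := by
  rw [L_eq_prod hn h2]
  conv_rhs => rw [← n_eq_prod (by omega : n ≠ 0)]
  have hq2' : q2 ∈ n.primeFactors.erase q1 := Finset.mem_erase.2 ⟨hne, hq2⟩
  rw [← Finset.mul_prod_erase _ _ hq1, ← Finset.mul_prod_erase _ (fun p => p ^ n.factorization p) hq1,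
    ← Finset.mul_prod_erase _ _ hq2', ← Finset.mul_prod_erase _ (fun p => p ^ n.factorization p) hq2']
  have hrest : ∏ p ∈ (n.primeFactors.erase q1).erase q2, p ^ (n.factorization p - 1) * (p - 2)
      ≤ ∏ p ∈ (n.primeFactors.erase q1).erase q2, p ^ n.factorization p :=
    Finset.prod_le_prod' fun p hp =>
      prime_le h2 (Finset.mem_of_mem_erase (Finset.mem_of_mem_erase hp))
  calc c1 * c2 * (q1 ^ (n.factorization q1 - 1) * (q1 - 2) *
          (q2 ^ (n.factorization q2 - 1) * (q2 - 2) *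
            ∏ p ∈ (n.primeFactors.erase q1).erase q2, p ^ (n.factorization p - 1) * (p - 2)))
      = (c1 * (q1 ^ (n.factorization q1 - 1) * (q1 - 2))) *
          ((c2 * (q2 ^ (n.factorization q2 - 1) * (q2 - 2))) *
            ∏ p ∈ (n.primeFactors.erase q1).erase q2, p ^ (n.factorization p - 1) * (p - 2)) := by ring
    _ ≤ (d1 * q1 ^ n.factorization q1) *
          ((d2 * q2 ^ n.factorization q2) *
            ∏ p ∈ (n.primeFactors.erase q1).erase q2, p ^ n.factorization p) :=
        Nat.mul_le_mul hb1 (Nat.mul_le_mul hb2 hrest)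
    _ = d1 * d2 * (q1 ^ n.factorization q1 * (q2 ^ n.factorization q2 *
            ∏ p ∈ (n.primeFactors.erase q1).erase q2, p ^ n.factorization p)) := by ring

lemma ratio_arith {q a c d : ℕ} (ha : 1 ≤ a) (h : c * (q - 2) ≤ d * q) :
    c * (q ^ (a - 1) * (q - 2)) ≤ d * q ^ a := by
  calc c * (q ^ (a - 1) * (q - 2)) = (c * (q - 2)) * q ^ (a - 1) := by ring
    _ ≤ (d * q) * q ^ (a - 1) := Nat.mul_le_mul_right _ h
    _ = d * (q ^ (a - 1) * q) := by ring
    _ = d * q ^ a := by rw [pow_fact_eq ha]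

lemma sub_two_dvd_L {n : ℕ} (hn : 1 < n) (h2 : ∀ p ∈ n.primeFactors, 2 < p)
    {q : ℕ} (hq : q ∈ n.primeFactors) : (q - 2) ∣ L 2 n := by
  rw [L_eq_prod hn h2]
  exact dvd_trans (dvd_mul_left _ _) (Finset.dvd_prod_of_mem _ hq)

lemma mod3_one_of_forall {n : ℕ} (hn : n ≠ 0) (h : ∀ p ∈ n.primeFactors, p % 3 = 1) :
    n % 3 = 1 := by
  conv_lhs => rw [← n_eq_prod hn]
  rw [Finset.prod_nat_mod]
  have : ∀ p ∈ n.primeFactors, p ^ n.factorization p % 3 = 1 := by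
    intro p hp
    rw [Nat.pow_mod, h p hp, one_pow]
    rfl
  rw [Finset.prod_congr rfl this]
  simp

-- fact: derive all prime factors > 2 from L ≠ 0, and basic memberships
lemma three_mem {n : ℕ} (hn : n ≠ 0) (h3 : 3 ∣ n) : 3 ∈ n.primeFactors :=
  Nat.mem_primeFactors.2 ⟨Nat.prime_three, h3, hn⟩

/-- (i) 3 ∣ n → 3 * L 2 n ≤ n -/
lemma L2_third {n : ℕ} (hn : 1 < n) (h2 : ∀ p ∈ n.primeFactors, 2 < p) (h3 : 3 ∣ n) :
    3 * L 2 n ≤ n := by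
  have hm := three_mem (by omega) h3
  have := L_ratio hn h2 hm 3 1 (ratio_arith (fact_pos hm) (by norm_num))
  omega

/-- if q ∈ pf with q % 3 = 2 then 3 ∣ L 2 n -/
lemma L2_dvd3 {n : ℕ} (hn : 1 < n) (h2 : ∀ p ∈ n.primeFactors, 2 < p)
    {q : ℕ} (hq : q ∈ n.primeFactors) (hq2 : q % 3 = 2) : 3 ∣ L 2 n := by
  have h := sub_two_dvd_L hn h2 hq
  have hq3 : 2 < q := h2 q hq
  have : (3 : ℕ) ∣ (q - 2) := by omega
  exact this.trans h


/-- any t ≡ 2 mod 3 has a prime factor ≡ 2 mod 3 -/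
lemma exists_prime_two_mod_three {t : ℕ} (ht : t % 3 = 2) :
    ∃ q, q.Prime ∧ q ∣ t ∧ q % 3 = 2 := by
  by_contra h
  push_neg at h
  have hall : ∀ q ∈ t.primeFactors, q % 3 = 1 := by
    intro q hq
    have hqp := Nat.prime_of_mem_primeFactors hq
    have hqd := Nat.dvd_of_mem_primeFactors hq
    have h2 := h q hqp hqd
    have : q % 3 ≠ 0 := by
      intro h0
      have : (3:ℕ) ∣ q := by omega
      rcases hqp.eq_one_or_self_of_dvd 3 this with h' | h'
      · omega
      · subst h'
        have : (3:ℕ) ∣ t := hqd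
        omega
    omega
  have := mod3_one_of_forall (by omega : t ≠ 0) hall
  omega

/-- Key structural lemma: if 3 ∣ k, c = L 2 k > 1 and 3 ∤ c, then c has a
prime factor ≡ 2 mod 3. -/
lemma exists_bad_prime {k : ℕ} (hk : 1 < k) (h2 : ∀ p ∈ k.primeFactors, 2 < p)
    (h3 : 3 ∣ k) (hc1 : 1 < L 2 k) (h3c : ¬ 3 ∣ L 2 k) :
    ∃ q, q.Prime ∧ q ∣ L 2 k ∧ q % 3 = 2 := by
  have hm3 := three_mem (by omega : k ≠ 0) h3
  -- there is a prime factor p of k with p ≠ 3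
  have hq : ∃ p ∈ k.primeFactors, p ≠ 3 := by
    by_contra h
    push_neg at h
    have hpfs : k.primeFactors = {3} :=
      Finset.eq_singleton_iff_unique_mem.2 ⟨hm3, fun q hq => h q hq⟩
    have hLp := L_eq_prod hk h2
    rw [hpfs] at hLp
    simp at hLp
    have ha := fact_pos hm3
    rcases Nat.lt_or_ge (k.factorization 3) 2 with h' | h'
    · interval_cases (k.factorization 3)
      · simp at hLp; omega
    · have : (3:ℕ) ∣ 3 ^ (k.factorization 3 - 1) := dvd_pow_self 3 (by omega)
      rw [← hLp] at this
      exact h3c this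
  obtain ⟨p, hpm, hp3⟩ := hq
  have hpp := Nat.prime_of_mem_primeFactors hpm
  have hp2 := h2 p hpm
  -- p % 3 = 1
  have hp1 : p % 3 = 1 := by
    have hne2 : p % 3 ≠ 2 := fun h => h3c (L2_dvd3 hk h2 hpm h)
    have : p % 3 ≠ 0 := by
      intro h0
      have : (3:ℕ) ∣ p := by omega
      rcases hpp.eq_one_or_self_of_dvd 3 this with h' | h' <;> omega
    omega
  -- p - 2 ≡ 2 mod 3 and p - 2 ∣ L 2 k
  have hsub : (p - 2) % 3 = 2 := by omega
  obtain ⟨q, hqp, hqd, hq2⟩ := exists_prime_two_mod_three hsub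
  exact ⟨q, hqp, hqd.trans (sub_two_dvd_L hk h2 hpm), hq2⟩

lemma L_fix {m n : ℕ} (h : n ≤ 1) : L m n = n := by simp [L, h]

lemma iter_fix {m n : ℕ} (h : n ≤ 1) (j : ℕ) : (L m)^[j] n = n := by
  induction j with
  | zero => rfl
  | succ j ih => rw [Function.iterate_succ_apply, L_fix h]; exact ih

lemma iter_le_one {m : ℕ} (hm : 1 < m) : ∀ k n, n ≤ k → (L m)^[k] n ≤ 1 := by
  intro k
  induction k with
  | zero => intro n h; simp only [Function.iterate_zero, id_eq]; omega
  | succ k ih =>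
    intro n h
    rcases le_or_gt n 1 with h1 | h1
    · rw [iter_fix h1]; exact h1
    · rw [Function.iterate_succ_apply]
      exact ih _ (by have := L_lt hm h1; omega)

lemma R_set_nonempty {m : ℕ} (hm : 1 < m) (n : ℕ) :
    {k | 0 < k ∧ ((L m)^[k] n = 0 ∨ (L m)^[k] n = 1)}.Nonempty := by
  refine ⟨n + 1, Nat.succ_pos _, ?_⟩
  have := iter_le_one hm (n + 1) n (by omega)
  omega

lemma R_mem {m : ℕ} (hm : 1 < m) (n : ℕ) :
    0 < R m n ∧ ((L m)^[R m n] n = 0 ∨ (L m)^[R m n] n = 1) :=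
  Nat.sInf_mem (R_set_nonempty hm n)

lemma R_eq_one_of {m n : ℕ} (hm : 1 < m) (hL : L m n ≤ 1) : R m n = 1 := by
  have h1 : (1:ℕ) ∈ {k | 0 < k ∧ ((L m)^[k] n = 0 ∨ (L m)^[k] n = 1)} := by
    refine ⟨Nat.one_pos, ?_⟩
    rw [Function.iterate_one]
    omega
  have := Nat.sInf_le h1
  have := (R_mem hm n).1
  unfold R at *
  omega

lemma D_eq_of_small {m n : ℕ} (hm : 1 < m) (hn : 1 < n) (hL : L m n ≤ 1) :
    D m n = L m n := by
  rw [D, if_neg (by omega), R_eq_one_of hm hL, Finset.Icc_self, Finset.sum_singleton,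
    Function.iterate_one]

lemma R_succ {m n : ℕ} (hm : 1 < m) (hL : 1 < L m n) :
    R m n = R m (L m n) + 1 := by
  set S : Set ℕ := {k | 0 < k ∧ ((L m)^[k] n = 0 ∨ (L m)^[k] n = 1)} with hS
  set r := R m (L m n) with hr
  have hrmem := R_mem hm (L m n)
  have hmem : r + 1 ∈ S := by
    refine ⟨Nat.succ_pos _, ?_⟩
    rw [Function.iterate_succ_apply]
    exact hrmem.2
  have hlb : ∀ j ∈ S, r + 1 ≤ j := by
    rintro j ⟨hj0, hj⟩
    obtain ⟨t, rfl⟩ := Nat.exists_eq_succ_of_ne_zero (by omega : j ≠ 0)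
    rw [Function.iterate_succ_apply] at hj
    rcases Nat.eq_zero_or_pos t with rfl | ht
    · simp at hj; omega
    · have : t ∈ {k | 0 < k ∧ ((L m)^[k] (L m n) = 0 ∨ (L m)^[k] (L m n) = 1)} := ⟨ht, hj⟩
      have := Nat.sInf_le this
      rw [← R] at this
      omega
  have h1 : R m n ≤ r + 1 := Nat.sInf_le hmem
  have h2 : r + 1 ≤ R m n := hlb _ (Nat.sInf_mem ⟨r + 1, hmem⟩)
  omega

lemma D_rec {m n : ℕ} (hm : 1 < m) (hn : 1 < n) (hL : 1 < L m n) :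
    D m n = L m n + D m (L m n) := by
  have hr := R_succ hm hL
  rw [D, if_neg (by omega), hr]
  rw [D, if_neg (by omega)]
  have key : ∀ (c : ℕ) (r : ℕ), c = L m n →
      ∑ i ∈ Finset.Icc 1 (r + 1), (L m)^[i] n = c + ∑ i ∈ Finset.Icc 1 r, (L m)^[i] c := by
    intro c r hc
    rw [← Finset.Ico_add_one_right_eq_Icc, Finset.sum_Ico_eq_sum_range,
      ← Finset.Ico_add_one_right_eq_Icc, Finset.sum_Ico_eq_sum_range]
    simp only [Nat.succ_sub_one, Nat.add_sub_cancel]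
    rw [Finset.sum_range_succ']
    have h0 : (L m)^[1 + 0] n = c := by simp [hc]
    rw [h0, add_comm]
    congr 1
    apply Finset.sum_congr rfl
    intro i _
    show (L m)^[1 + (i+1)] n = (L m)^[1 + i] c
    rw [hc, show 1 + (i+1) = (1 + i) + 1 by omega, Function.iterate_succ_apply]
  exact key _ _ rfl

lemma main2 : ∀ k, 3 ∣ k → 0 < k → D 2 k < k := by
  intro k
  induction k using Nat.strong_induction_on with
  | _ k IH =>
  intro h3 hk
  have hk1 : 1 < k := by omega
  have hck : L 2 k < k := L_lt (by norm_num) hk1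
  rcases le_or_gt (L 2 k) 1 with hcle | hcgt
  · have := D_eq_of_small (m := 2) (by norm_num) hk1 hcle
    omega
  · have h2k : ∀ p ∈ k.primeFactors, 2 < p := L_pos_primes hk1 (by omega)
    have h3c' : 3 * L 2 k ≤ k := L2_third hk1 h2k h3
    have hD : D 2 k = L 2 k + D 2 (L 2 k) := D_rec (by norm_num) hk1 hcgt
    by_cases hdvd : 3 ∣ L 2 k
    · have := IH (L 2 k) hck hdvd (by omega)
      omega
    · obtain ⟨q, hqp, hqd, hq2⟩ := exists_bad_prime hk1 h2k h3 hcgt hdvd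
      have hc'c : L 2 (L 2 k) < L 2 k := L_lt (by norm_num) hcgt
      rcases le_or_gt (L 2 (L 2 k)) 1 with h'le | h'gt
      · have := D_eq_of_small (m := 2) (by norm_num) hcgt h'le
        omega
      · have h2c : ∀ p ∈ (L 2 k).primeFactors, 2 < p := L_pos_primes hcgt (by omega)
        have hqm : q ∈ (L 2 k).primeFactors := Nat.mem_primeFactors.2 ⟨hqp, hqd, by omega⟩
        have h3c'' : 3 ∣ L 2 (L 2 k) := L2_dvd3 hcgt h2c hqm hq2
        have hDc : D 2 (L 2 k) = L 2 (L 2 k) + D 2 (L 2 (L 2 k)) := D_rec (by norm_num) hcgt h'gt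
        have := IH (L 2 (L 2 k)) (by omega) h3c'' (by omega)
        omega

theorem Dm_deficient_of_three_dvd (m : ℕ) (hm : 1 < m) :
    ∀ n : ℕ, 0 < n → 3 ∣ n → D m n < n := by
  intro n hn h3
  rcases lt_or_ge m 3 with hm3 | hm3
  · have hm2 : m = 2 := by omega
    subst hm2
    exact main2 n h3 hn
  · have hn1 : 1 < n := by omega
    have hL0 : L m n = 0 := by
      rw [L, if_neg (by omega : ¬ n ≤ 1), if_neg]
      push_neg
      exact ⟨3, three_mem (by omega) h3, by omega⟩
    have := D_eq_of_small (by omega : 1 < m) hn1 (by omega)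
    omega
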